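/- For any odd prime p, the Eisenstein congruence -2 F(2) \equiv H_{(p-1)/2} (mod p) holds, where F(2) = (2^{p-1}-1)/p and H_{(p-1)/2} = \sum_{j=1}^{(p-1)/2} 1/j with inverses taken mod p. Equivalently, 2(1 - 2^{p-1}) / p \equiv \sum_{j=1}^{(p-1)/2} j^{-1} (mod p). -/

import Mathlib

open Finset

private lemma sum_Icc_pair {M : Type*} [AddCommMonoid M] (f : ℕ → M) (m : ℕ) :
    ∑ k ∈ Icc 1 (2 * m), f k = ∑ j ∈ Icc 1 m, (f (2 * j - 1) + f (2 * j)) := by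
  induction m with
  | zero => simp
  | succ n ih =>
    have h1 : 2 * (n + 1) = (2 * n + 1) + 1 := by ring
    rw [h1, Finset.sum_Icc_succ_top (by omega), Finset.sum_Icc_succ_top (by omega),
      Finset.sum_Icc_succ_top (by omega : 1 ≤ n + 1), ih,
      show 2 * (n + 1) - 1 = 2 * n + 1 from by omega,
      show 2 * (n + 1) = 2 * n + 1 + 1 from by omega, add_assoc]

private lemma choose_pred_cast (p : ℕ) [hp : Fact p.Prime] (j : ℕ) (hj : j ≤ p - 1) :
    (((p - 1).choose j : ℕ) : ZMod p) = (-1) ^ j := by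
  induction j with
  | zero => simp
  | succ n ih =>
    have hp1 : p - 1 + 1 = p := Nat.succ_pred_eq_of_pos hp.out.pos
    have pascal : p.choose (n + 1) = (p - 1).choose n + (p - 1).choose (n + 1) := by
      conv_lhs => rw [← hp1]
      exact Nat.choose_succ_succ _ _
    have hdvd : p ∣ p.choose (n + 1) :=
      Nat.Prime.dvd_choose_self hp.out (Nat.succ_ne_zero n) (by omega)
    have h0 : ((p.choose (n + 1) : ℕ) : ZMod p) = 0 :=
      (ZMod.natCast_eq_zero_iff _ _).mpr hdvd
    have := congrArg (fun x : ℕ => (x : ZMod p)) pascal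
    simp only [Nat.cast_add, h0] at this
    have ihn := ih (by omega)
    rw [ihn] at this
    have : (((p - 1).choose (n + 1) : ℕ) : ZMod p) = -(-1) ^ n := by linear_combination -this
    rw [this, pow_succ]
    ring

theorem eisenstein_congruence (p : ℕ) [Fact p.Prime] (hodd : Odd p) :
    (-2 : ZMod p) * (((2 ^ (p - 1) - 1) / p : ℤ) : ZMod p) =
      ∑ j ∈ Finset.Icc 1 ((p - 1) / 2), (j : ZMod p)⁻¹ := by
  have hp : p.Prime := Fact.out
  have hp2 : p ≠ 2 := by rintro rfl; exact (Nat.not_odd_iff_even.mpr (by norm_num)) hodd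
  have hp3 : 3 ≤ p := by
    rcases hp.two_le.lt_or_eq with h | h
    · omega
    · omega
  obtain ⟨t, ht⟩ := hodd
  obtain ⟨m, hm⟩ : ∃ m, p - 1 = 2 * m := ⟨t, by omega⟩
  have hm1 : 1 ≤ m := by omega
  have h2ne : (2 : ZMod p) ≠ 0 := by
    have : ((2 : ℕ) : ZMod p) ≠ 0 := by
      rw [Ne, ZMod.natCast_eq_zero_iff]
      intro h
      have := Nat.le_of_dvd (by norm_num) h
      omega
    simpa using this
  -- Fermat: p ∣ 2^(p-1) - 1
  have hferm : ((2 : ZMod p)) ^ (p - 1) = 1 := ZMod.pow_card_sub_one_eq_one h2ne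
  have hdvd : (p : ℤ) ∣ 2 ^ (p - 1) - 1 := by
    rw [← ZMod.intCast_zmod_eq_zero_iff_dvd]
    push_cast
    rw [hferm]; ring
  set q : ℤ := (2 ^ (p - 1) - 1) / p with hq
  have hpq : (p : ℤ) * q = 2 ^ (p - 1) - 1 := Int.mul_ediv_cancel' hdvd
  -- the integer binomial quotients
  set c : ℕ → ℕ := fun k => p.choose k / p with hc
  have hpc : ∀ k ∈ Icc 1 (p - 1), p * c k = p.choose k := by
    intro k hk
    simp only [mem_Icc] at hk
    have hk1 : k ≠ 0 := by omega
    have hk2 : k < p := by omega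
    exact Nat.mul_div_cancel' (Nat.Prime.dvd_choose_self hp hk1 hk2)
  -- sum of choose from 1 to p-1 equals 2^p - 2
  have hsum_choose : (p : ℤ) * ∑ k ∈ Icc 1 (p - 1), (c k : ℤ) = 2 ^ p - 2 := by
    have h1 : ∑ k ∈ range (p + 1), p.choose k = 2 ^ p := Nat.sum_range_choose p
    have h2 : range (p + 1) = insert 0 (insert p (Icc 1 (p - 1))) := by
      ext x
      simp only [mem_range, mem_insert, mem_Icc]
      omega
    rw [h2, Finset.sum_insert (by simp [mem_Icc]; omega),
      Finset.sum_insert (by simp [mem_Icc]; omega)] at h1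
    simp only [Nat.choose_zero_right, Nat.choose_self] at h1
    have h3 : (∑ k ∈ Icc 1 (p - 1), (p.choose k : ℤ)) = 2 ^ p - 2 := by
      have := congrArg (fun x : ℕ => (x : ℤ)) h1
      push_cast at this
      linarith
    rw [Finset.mul_sum]
    rw [← h3]
    apply Finset.sum_congr rfl
    intro k hk
    have := hpc k hk
    exact_mod_cast congrArg (fun x : ℕ => (x : ℤ)) this
  -- ∑ c k = 2q in ZMod p? No: ∑ c k = 2q as integers
  have hsum_c : ∑ k ∈ Icc 1 (p - 1), (c k : ℤ) = 2 * q := by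
    have hpne : (p : ℤ) ≠ 0 := by exact_mod_cast hp.pos.ne'
    have : (p : ℤ) * (2 * q) = 2 ^ p - 2 := by
      have : (2:ℤ) ^ p = 2 * 2 ^ (p - 1) := by
        conv_lhs => rw [show p = (p - 1) + 1 by omega]
        ring
      rw [this]; linarith [hpq]
    exact mul_left_cancel₀ hpne (by rw [hsum_choose, this])
  -- c k mod p = (-1)^(k-1) * k⁻¹
  have hck : ∀ k ∈ Icc 1 (p - 1), ((c k : ℕ) : ZMod p) = (-1) ^ (k - 1) * (k : ZMod p)⁻¹ := by
    intro k hk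
    simp only [mem_Icc] at hk
    -- k * c k = (p-1).choose (k-1) in ℕ
    have key : c k * k = (p - 1).choose (k - 1) := by
      have h1 : p * (p - 1).choose (k - 1) = p.choose k * k := by
        have h := Nat.add_one_mul_choose_eq (p - 1) (k - 1)
        rw [show p - 1 + 1 = p from by omega, show k - 1 + 1 = k from by omega] at h
        exact h
      have h2 : p * ((p - 1).choose (k - 1)) = p * (c k * k) := by
        rw [h1, ← hpc k (by simp [mem_Icc]; omega)]; ring
      exact (Nat.eq_of_mul_eq_mul_left hp.pos h2).symm
    have hkne : (k : ZMod p) ≠ 0 := by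
      rw [Ne, ZMod.natCast_eq_zero_iff]
      intro h
      have := Nat.le_of_dvd (by omega) h
      omega
    have := congrArg (fun x : ℕ => (x : ZMod p)) key
    simp only [Nat.cast_mul] at this
    rw [choose_pred_cast p (k - 1) (by omega)] at this
    field_simp
    rw [mul_comm] at this ⊢
    rw [this]
  -- LHS = ∑ (-1)^k k⁻¹
  have hq_cast : (-2 : ZMod p) * ((q : ℤ) : ZMod p)
      = ∑ k ∈ Icc 1 (p - 1), (-1 : ZMod p) ^ k * (k : ZMod p)⁻¹ := by
    have h1 : ((2 * q : ℤ) : ZMod p) = ∑ k ∈ Icc 1 (p - 1), ((c k : ℕ) : ZMod p) := by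
      rw [← hsum_c]
      push_cast
      rfl
    have h2 : (-2 : ZMod p) * ((q : ℤ) : ZMod p) = -(((2 * q : ℤ) : ZMod p)) := by
      push_cast; ring
    rw [h2, h1, ← Finset.sum_neg_distrib]
    apply Finset.sum_congr rfl
    intro k hk
    simp only [mem_Icc] at hk
    rw [hck k (by simp [mem_Icc]; omega)]
    obtain ⟨k', rfl⟩ : ∃ k', k = k' + 1 := ⟨k - 1, by omega⟩
    simp only [Nat.add_sub_cancel, pow_succ]
    ring
  rw [hq_cast]
  -- Now the sum manipulation. S = 0.
  have hS : ∑ k ∈ Icc 1 (p - 1), (k : ZMod p)⁻¹ = 0 := by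
    have huniv : ∑ x : ZMod p, x = 0 := by
      have h1 : ∑ x : ZMod p, x = ∑ x : ZMod p, -x :=
        (Fintype.sum_equiv (Equiv.neg (ZMod p)) _ _ (fun x => by simp)).symm
      have h2 : (2 : ZMod p) * ∑ x : ZMod p, x = 0 := by
        rw [two_mul]; nth_rewrite 2 [h1]; rw [← Finset.sum_add_distrib]; simp
      exact (mul_eq_zero.mp h2).resolve_left h2ne
    have hinv : ∑ x : ZMod p, x⁻¹ = 0 := by
      rw [← huniv]
      exact Fintype.sum_equiv (Equiv.inv (ZMod p)) _ _ (fun x => by simp)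
    haveI : NeZero p := ⟨hp.pos.ne'⟩
    have hbij : ∑ k ∈ range p, ((k : ZMod p))⁻¹ = ∑ x : ZMod p, x⁻¹ :=
      Finset.sum_nbij' (fun k => (k : ZMod p)) (fun x => x.val)
        (fun a _ => Finset.mem_univ _) (fun a _ => mem_range.mpr (ZMod.val_lt a))
        (fun a ha => ZMod.val_natCast_of_lt (mem_range.mp ha))
        (fun a _ => by simp [ZMod.natCast_val, ZMod.cast_id])
        (fun a _ => rfl)
    have hsplit : range p = insert 0 (Icc 1 (p - 1)) := by
      ext x; simp only [mem_range, mem_insert, mem_Icc]; omega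
    rw [hsplit, Finset.sum_insert (by simp [mem_Icc])] at hbij
    simp only [Nat.cast_zero, inv_zero, zero_add] at hbij
    rw [hbij, hinv]
  -- pairing
  have hpair : ∑ k ∈ Icc 1 (p - 1), ((-1 : ZMod p) ^ k * (k : ZMod p)⁻¹ + (k : ZMod p)⁻¹)
      = ∑ j ∈ Icc 1 m, 2 * ((2 * j : ℕ) : ZMod p)⁻¹ := by
    rw [hm, sum_Icc_pair (fun k => (-1 : ZMod p) ^ k * (k : ZMod p)⁻¹ + (k : ZMod p)⁻¹)]
    apply Finset.sum_congr rfl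
    intro j hj
    simp only [mem_Icc] at hj
    have hodd' : Odd (2 * j - 1) := by
      refine ⟨j - 1, by omega⟩
    have heven : (-1 : ZMod p) ^ (2 * j) = 1 := by
      rw [pow_mul]; norm_num
    rw [hodd'.neg_one_pow, heven]
    push_cast
    ring
  have hEH : ∑ j ∈ Icc 1 m, 2 * ((2 * j : ℕ) : ZMod p)⁻¹ = ∑ j ∈ Icc 1 m, (j : ZMod p)⁻¹ := by
    apply Finset.sum_congr rfl
    intro j hj
    push_cast
    rw [mul_inv_rev, ← mul_assoc]
    rw [mul_comm (2 : ZMod p) ((j:ZMod p))⁻¹, mul_assoc, mul_inv_cancel₀ h2ne, mul_one]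
  have hmdef : (p - 1) / 2 = m := by omega
  rw [hmdef]
  have := hpair
  rw [Finset.sum_add_distrib, hS, add_zero, hEH] at this
  exact this
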